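/- m-way jagged dynamic programming recurrence: for a matrix A with n₁ rows and m processors, the optimal maximum load over all m-way jagged partitions (stripes of consecutive rows, each stripe split into column intervals) satisfies L*(n₁, m) = min over 1 ≤ k ≤ n₁ and 1 ≤ x ≤ m of max{ L*(k−1, m−x), OneD(k, n₁, x) }, where OneD(i,j,x) is the optimal maximum load of partitioning the column-projection of rows i..j into x intervals; base cases L*(0, p) = 0 for p ≥ 0, and L*(j, 0) = +∞ for j ≥ 1. -/

import Mathlib

open scoped ENNReal

/-- Optimal maximum interval load (in `ℝ≥0∞`) for partitioning the length-`n`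
prefix of the array `f` into `k` contiguous (possibly empty) intervals;
`⊤` if no such partition exists. -/
noncomputable def opt1DE (f : ℕ → ℝ≥0∞) (n k : ℕ) : ℝ≥0∞ :=
  sInf {L | ∃ c : ℕ → ℕ, Monotone c ∧ c 0 = 0 ∧ c k = n ∧
    L = ⨆ j : Fin k, ∑ i ∈ Finset.Ico (c j.1) (c (j.1 + 1)), f i}

/-- Optimal cost, over all `p`-way jagged partitions of the first `j` rows of the
matrix `A` (with `n₂` columns), of the maximum rectangle load: the rows are cut
into nonempty stripes `[r t, r (t+1))`, stripe `t` gets `x t ≥ 1` processors with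
`∑ x ≤ p`, and each stripe is partitioned optimally into `x t` column intervals.
`⊤` if no such partition exists. -/
noncomputable def jaggedOpt (A : ℕ → ℕ → ℝ≥0∞) (n₂ j p : ℕ) : ℝ≥0∞ :=
  sInf {L | ∃ (P : ℕ) (r : ℕ → ℕ) (x : ℕ → ℕ),
    r 0 = 0 ∧ r P = j ∧ (∀ t < P, r t < r (t + 1)) ∧
    (∀ t < P, 1 ≤ x t) ∧ (∑ t ∈ Finset.range P, x t) ≤ p ∧
    L = ⨆ t : Fin P,
      opt1DE (fun y => ∑ i ∈ Finset.Ico (r t.1) (r (t.1 + 1)), A i y) n₂ (x t.1)}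

/-- Splitting a supremum over `Fin (P + 1)` at the last index. -/
lemma sup_split {α : Type*} [CompleteLattice α] (P : ℕ) (f : Fin (P + 1) → α) :
    (⨆ t, f t) = (⨆ t : Fin P, f t.castSucc) ⊔ f (Fin.last P) := by
  apply le_antisymm
  · exact iSup_le (Fin.lastCases le_sup_right
      (fun i => le_sup_of_le_left (le_iSup (fun t : Fin P => f t.castSucc) i)))
  · exact sup_le (iSup_le fun i => le_iSup f i.castSucc) (le_iSup f _)

/-- Base case: zero rows costs `0`. -/
lemma jagged_zero (A : ℕ → ℕ → ℝ≥0∞) (n₂ p : ℕ) : jaggedOpt A n₂ 0 p = 0 := by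
  refine le_antisymm (sInf_le ?_) zero_le
  exact ⟨0, fun _ => 0, fun _ => 0, rfl, rfl, by simp, by simp, by simp, by simp⟩

/-- Base case: at least one row with zero processors is infeasible. -/
lemma jagged_top (A : ℕ → ℕ → ℝ≥0∞) (n₂ j : ℕ) (hj : 1 ≤ j) :
    jaggedOpt A n₂ j 0 = ⊤ := by
  rw [jaggedOpt]
  convert (sInf_empty : sInf (∅ : Set ℝ≥0∞) = ⊤)
  · rfl
  rw [Set.eq_empty_iff_forall_notMem]
  rintro L ⟨P, r, x, h0, hP, _, hx1, hsum, _⟩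
  rcases Nat.eq_zero_or_pos P with h | h
  · rw [h] at hP; omega
  · have : 1 ≤ ∑ t ∈ Finset.range P, x t :=
      le_trans (hx1 0 h) (Finset.single_le_sum (fun _ _ => Nat.zero_le _)
        (Finset.mem_range.mpr h))
    omega

/-- The "≤" half of the recurrence, for a single choice of `k` and `x`:
append the stripe `[k, n₁)` with `x` processors to any partition of the
first `k` rows using `m - x` processors. -/
lemma jagged_le (A : ℕ → ℕ → ℝ≥0∞) (n₂ n₁ m k x : ℕ) (hk : k < n₁) (hx1 : 1 ≤ x)
    (hxm : x ≤ m) :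
    jaggedOpt A n₂ n₁ m ≤
      max (jaggedOpt A n₂ k (m - x))
        (opt1DE (fun y => ∑ i ∈ Finset.Ico k n₁, A i y) n₂ x) := by
  set b := opt1DE (fun y => ∑ i ∈ Finset.Ico k n₁, A i y) n₂ x with hb
  nth_rewrite 2 [jaggedOpt]
  rw [sInf_sup_eq]
  refine le_iInf₂ fun a ha => ?_
  obtain ⟨P, r, x', h0, hP, hlt, hx1', hsum, hval⟩ := ha
  refine sInf_le ⟨P + 1, (fun t => if t ≤ P then r t else n₁),
    (fun t => if t < P then x' t else x), by simp [h0], by simp, ?_, ?_, ?_, ?_⟩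
  · intro t ht
    by_cases htP : t < P
    · have h1 : t ≤ P := le_of_lt htP
      have h2 : t + 1 ≤ P := htP
      simp only [if_pos h1, if_pos h2]
      exact hlt t htP
    · have h1 : t ≤ P := by omega
      have h2 : ¬ (t + 1 ≤ P) := by omega
      simp only [if_pos h1, if_neg h2]
      have ht' : t = P := by omega
      rw [ht', hP]
      exact hk
  · intro t ht
    by_cases htP : t < P
    · simpa [htP] using hx1' t htP
    · simp [htP, hx1]
  · rw [Finset.sum_range_succ]
    have hc : ∑ t ∈ Finset.range P, (if t < P then x' t else x)
        = ∑ t ∈ Finset.range P, x' t :=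
      Finset.sum_congr rfl fun t ht => if_pos (Finset.mem_range.mp ht)
    rw [hc, if_neg (lt_irrefl P)]
    omega
  · rw [sup_split]
    congr 1
    · rw [hval]
      refine iSup_congr fun t => ?_
      have e1 : (if (t : ℕ) ≤ P then r t else n₁) = r t := if_pos (le_of_lt t.2)
      have e2 : (if (t : ℕ) + 1 ≤ P then r ((t : ℕ) + 1) else n₁) = r ((t : ℕ) + 1) :=
        if_pos t.2
      have e3 : (if (t : ℕ) < P then x' t else x) = x' t := if_pos t.2
      simp only [Fin.coe_castSucc, e1, e2, e3]
    · have e1 : (if P ≤ P then r P else n₁) = k := by rw [if_pos le_rfl, hP]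
      have e2 : (if P + 1 ≤ P then r (P + 1) else n₁) = n₁ := if_neg (by omega)
      have e3 : (if P < P then x' P else x) = x := if_neg (lt_irrefl P)
      simp only [Fin.val_last, e1, e2, e3, hb]

/-- dynamic programming recurrence for optimal `m`-way jagged
partitions: `L*(n₁, m) = min_{0 ≤ k < n₁, 1 ≤ x ≤ m} max (L*(k, m−x)) (OneD k n₁ x)`
where `OneD k n₁ x` is the optimal 1D partition of the column projection of rows
`[k, n₁)` into `x` intervals; base cases `L*(0, p) = 0` and `L*(j, 0) = ⊤` for
`j ≥ 1`. -/
theorem stmt_14 (n₁ n₂ m : ℕ) (hn₁ : 1 ≤ n₁) (hm : 1 ≤ m)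
    (A : ℕ → ℕ → ℝ≥0∞) :
    jaggedOpt A n₂ n₁ m =
      (⨅ k ∈ Finset.range n₁, ⨅ x ∈ Finset.Icc 1 m,
        max (jaggedOpt A n₂ k (m - x))
          (opt1DE (fun y => ∑ i ∈ Finset.Ico k n₁, A i y) n₂ x)) ∧
    (∀ p, jaggedOpt A n₂ 0 p = 0) ∧
    (∀ j, 1 ≤ j → jaggedOpt A n₂ j 0 = ⊤) := by
  refine ⟨le_antisymm ?_ ?_, fun p => jagged_zero A n₂ p, fun j hj => jagged_top A n₂ j hj⟩
  · refine le_iInf₂ fun k hk => le_iInf₂ fun x hx => ?_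
    rw [Finset.mem_range] at hk
    rw [Finset.mem_Icc] at hx
    exact jagged_le A n₂ n₁ m k x hk hx.1 hx.2
  · rw [jaggedOpt]
    refine le_sInf fun L hL => ?_
    obtain ⟨P, r, x', h0, hP, hlt, hx1, hsum, hval⟩ := hL
    have hP0 : P ≠ 0 := by rintro rfl; omega
    obtain ⟨Q, rfl⟩ := Nat.exists_eq_succ_of_ne_zero hP0
    have hQ : Q < Q + 1 := Nat.lt_succ_self Q
    have hkr : r Q < n₁ := hP ▸ hlt Q hQ
    have hxm : x' Q ≤ m :=
      le_trans (Finset.single_le_sum (fun _ _ => Nat.zero_le _)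
        (Finset.mem_range.mpr hQ)) hsum
    refine le_trans (iInf₂_le_of_le (r Q) (Finset.mem_range.mpr hkr)
      (iInf₂_le (x' Q) (Finset.mem_Icc.mpr ⟨hx1 Q hQ, hxm⟩))) ?_
    rw [hval, sup_split]
    refine max_le (le_sup_of_le_left ?_) (le_sup_of_le_right ?_)
    · refine sInf_le ⟨Q, r, x', h0, rfl, fun t ht => hlt t (ht.trans hQ),
        fun t ht => hx1 t (ht.trans hQ), ?_, ?_⟩
      · rw [Finset.sum_range_succ] at hsum
        omega
      · rfl
    · simp only [Fin.val_last, hP]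
      exact le_rfl
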